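/- Let k ≥ 1 be a natural number. For every finitely supported function u : ℤ → ℂ with u(0) = 0, one has ∑_{n ∈ ℤ} |u(n) − u(n−1)|² (n − 1/2)^{2k} ≥ ((2k−1)²/4) · ∑_{n ∈ ℤ} |u(n)|² n^{2k−2}. -/

import Mathlib

open scoped BigOperators

private lemma norm_sq_complex (z : ℂ) : ‖z‖^2 = z.re^2 + z.im^2 := by
  rw [Complex.sq_norm, Complex.normSq_apply]; ring

private lemma key_identity (c : ℝ) (a b : ℂ) :
    ‖(c:ℂ)*(a-b) - (a+b)/2‖^2
      = c^2*‖a-b‖^2 - c*(‖a‖^2 - ‖b‖^2) + ‖a+b‖^2/4 := by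
  have h2 : ((a+b)/2) = ((1/2:ℝ):ℂ) * (a+b) := by push_cast; ring
  rw [h2]
  simp only [norm_sq_complex, Complex.sub_re, Complex.sub_im, Complex.add_re, Complex.add_im,
    Complex.mul_re, Complex.mul_im, Complex.ofReal_re, Complex.ofReal_im]
  ring

private lemma parallelogram (a b : ℂ) : ‖a+b‖^2 = 2*‖a‖^2 + 2*‖b‖^2 - ‖a-b‖^2 := by
  simp only [norm_sq_complex, Complex.sub_re, Complex.sub_im, Complex.add_re, Complex.add_im]
  ring

private lemma edge_amgm (t : ℝ) (ht : 0 < t) (a b : ℂ) :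
    (1-t)*‖a‖^2 + (1-1/t)*‖b‖^2 ≤ ‖a - b‖^2 := by
  have h1 : |‖a‖ - ‖b‖| ≤ ‖a - b‖ := abs_norm_sub_norm_le a b
  have h2 : (‖a‖ - ‖b‖)^2 ≤ ‖a-b‖^2 := by
    rw [← sq_abs (‖a‖ - ‖b‖)]
    exact pow_le_pow_left₀ (abs_nonneg _) h1 2
  have h3 : (1-t)*‖a‖^2 + (1-1/t)*‖b‖^2 ≤ (‖a‖ - ‖b‖)^2 := by
    have key : (‖a‖ - ‖b‖)^2 - ((1-t)*‖a‖^2 + (1-1/t)*‖b‖^2) = (t*‖a‖-‖b‖)^2/t := by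
      field_simp; ring
    nlinarith [div_nonneg (sq_nonneg (t*‖a‖-‖b‖)) ht.le]
  linarith

private lemma int_mul_nonneg (n : ℤ) : (0:ℝ) ≤ (n:ℝ)*((n:ℝ)-1) := by
  rcases le_or_gt n 0 with h | h
  · have : (n:ℝ) ≤ 0 := by exact_mod_cast h
    nlinarith
  · have : (1:ℝ) ≤ (n:ℝ) := by exact_mod_cast h
    nlinarith

private lemma midpoint_pow (K : ℕ) (x : ℝ) :
    (2*(K:ℝ)+1) * x^(2*K) ≤ (x+1/2)^(2*K+1) - (x-1/2)^(2*K+1) := by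
  have h1 : (x + 1/2)^(2*K+1) = ∑ j ∈ Finset.range (2*K+2),
      x^j * (1/2:ℝ)^(2*K+1-j) * (Nat.choose (2*K+1) j) := add_pow x (1/2) (2*K+1)
  have h2 : (x - 1/2)^(2*K+1) = ∑ j ∈ Finset.range (2*K+2),
      x^j * (-(1/2):ℝ)^(2*K+1-j) * (Nat.choose (2*K+1) j) := by
    have := add_pow x (-(1/2):ℝ) (2*K+1)
    rw [← sub_eq_add_neg] at this
    exact this
  rw [h1, h2, ← Finset.sum_sub_distrib]
  have hterm : ∀ j ∈ Finset.range (2*K+2),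
      (0:ℝ) ≤ x^j * (1/2:ℝ)^(2*K+1-j) * (Nat.choose (2*K+1) j)
        - x^j * (-(1/2):ℝ)^(2*K+1-j) * (Nat.choose (2*K+1) j) := by
    intro j hj
    rcases Nat.even_or_odd (2*K+1-j) with he | ho
    · rw [he.neg_pow]; simp
    · rw [ho.neg_pow]
      have hje : Even j := by
        rw [Nat.even_iff]
        rcases ho with ⟨a, ha⟩
        omega
      have hx : (0:ℝ) ≤ x ^ j := hje.pow_nonneg x
      have h2' : x^j * (1/2:ℝ)^(2*K+1-j) * ((Nat.choose (2*K+1) j):ℝ)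
          - x^j * (-((1/2:ℝ)^(2*K+1-j))) * ((Nat.choose (2*K+1) j):ℝ)
          = 2*(x^j * (1/2:ℝ)^(2*K+1-j) * ((Nat.choose (2*K+1) j):ℝ)) := by ring
      rw [h2']
      positivity
  have hmem : 2*K ∈ Finset.range (2*K+2) := Finset.mem_range.mpr (by omega)
  have hsingle := Finset.single_le_sum hterm hmem
  have hval : x^(2*K) * (1/2:ℝ)^(2*K+1-2*K) * (Nat.choose (2*K+1) (2*K))
        - x^(2*K) * (-(1/2):ℝ)^(2*K+1-2*K) * (Nat.choose (2*K+1) (2*K))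
      = (2*(K:ℝ)+1) * x^(2*K) := by
    have hc : Nat.choose (2*K+1) (2*K) = 2*K+1 := by
      have := Nat.choose_symm (n := 2*K+1) (k := 1) (by omega)
      simpa using this
    have he : 2*K+1-2*K = 1 := by omega
    rw [hc, he]
    push_cast
    ring
  rw [hval] at hsingle
  exact hsingle

private lemma avg_pow (K : ℕ) (x : ℝ) :
    x^(2*K) ≤ ((x-1/2)^(2*K) + (x+1/2)^(2*K))/2 := by
  have h1 : (x + 1/2)^(2*K) = ∑ j ∈ Finset.range (2*K+1),
      x^j * (1/2:ℝ)^(2*K-j) * (Nat.choose (2*K) j) := add_pow x (1/2) (2*K)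
  have h2 : (x - 1/2)^(2*K) = ∑ j ∈ Finset.range (2*K+1),
      x^j * (-(1/2):ℝ)^(2*K-j) * (Nat.choose (2*K) j) := by
    have := add_pow x (-(1/2):ℝ) (2*K)
    rw [← sub_eq_add_neg] at this
    exact this
  rw [le_div_iff₀ (by norm_num : (0:ℝ) < 2)]
  rw [h1, h2, ← Finset.sum_add_distrib]
  have hterm : ∀ j ∈ Finset.range (2*K+1),
      (0:ℝ) ≤ x^j * (-(1/2):ℝ)^(2*K-j) * (Nat.choose (2*K) j)
        + x^j * (1/2:ℝ)^(2*K-j) * (Nat.choose (2*K) j) := by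
    intro j hj
    rcases Nat.even_or_odd (2*K-j) with he | ho
    · rw [he.neg_pow]
      have hje : Even j := by
        rw [Nat.even_iff]
        rcases he with ⟨a, ha⟩
        have hjle : j ≤ 2*K := by
          have := Finset.mem_range.mp hj; omega
        omega
      have hx : (0:ℝ) ≤ x ^ j := hje.pow_nonneg x
      have : x^j * ((1/2:ℝ)^(2*K-j)) * ((Nat.choose (2*K) j):ℝ)
          + x^j * (1/2:ℝ)^(2*K-j) * ((Nat.choose (2*K) j):ℝ)
          = 2*(x^j * (1/2:ℝ)^(2*K-j) * ((Nat.choose (2*K) j):ℝ)) := by ring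
      rw [this]
      positivity
    · rw [ho.neg_pow]
      have : x^j * (-((1/2:ℝ)^(2*K-j))) * ((Nat.choose (2*K) j):ℝ)
          + x^j * (1/2:ℝ)^(2*K-j) * ((Nat.choose (2*K) j):ℝ) = 0 := by ring
      rw [this]
  have hmem : 2*K ∈ Finset.range (2*K+1) := Finset.mem_range.mpr (by omega)
  have hsingle := Finset.single_le_sum hterm hmem
  have hval : x^(2*K) * (-(1/2):ℝ)^(2*K-2*K) * (Nat.choose (2*K) (2*K))
        + x^(2*K) * (1/2:ℝ)^(2*K-2*K) * (Nat.choose (2*K) (2*K)) = 2 * x^(2*K) := by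
    have he : 2*K-2*K = 0 := by omega
    rw [he, Nat.choose_self]
    norm_num
    ring
  rw [hval] at hsingle
  calc x^(2*K) * 2 = 2 * x^(2*K) := by ring
    _ ≤ _ := hsingle

private lemma summable_help (u : ℤ → ℂ) (hu : (Function.support u).Finite)
    (g : ℤ → ℝ) (hg : ∀ n, u n = 0 → u (n-1) = 0 → g n = 0) : Summable g := by
  apply summable_of_ne_finset_zero (s := hu.toFinset ∪ hu.toFinset.image (· + 1))
  intro b hb
  rw [Finset.mem_union] at hb
  push_neg at hb
  obtain ⟨hb1, hb2⟩ := hb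
  have h1 : u b = 0 := by
    by_contra h
    exact hb1 (hu.mem_toFinset.mpr h)
  have h2 : u (b-1) = 0 := by
    by_contra h
    apply hb2
    rw [Finset.mem_image]
    exact ⟨b-1, hu.mem_toFinset.mpr h, by ring⟩
  exact hg b h1 h2

private noncomputable def AA (n : ℤ) : ℝ :=
  if 2 ≤ n then -((n:ℝ)*((n:ℝ)-1))/(2*(n:ℝ)-1)
  else if n = 1 ∨ n = 0 then 0
  else (n:ℝ)*((n:ℝ)-1)/(2-2*(n:ℝ))

private noncomputable def BB (n : ℤ) : ℝ :=
  if 2 ≤ n then ((n:ℝ)-1)/2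
  else if n = 1 ∨ n = 0 then 0
  else (n:ℝ)*((n:ℝ)-1)/(2*(n:ℝ)-1)

private lemma edge_bound (u : ℤ → ℂ) (n : ℤ) :
    AA n * ‖u n‖^2 + BB n * ‖u (n-1)‖^2
      ≤ ‖u n - u (n-1)‖^2 * ((n:ℝ)*((n:ℝ)-1)) := by
  have master : ∀ t : ℝ, 0 < t →
      ((1-t)*‖u n‖^2 + (1-1/t)*‖u (n-1)‖^2) * ((n:ℝ)*((n:ℝ)-1))
        ≤ ‖u n - u (n-1)‖^2 * ((n:ℝ)*((n:ℝ)-1)) :=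
    fun t ht => mul_le_mul_of_nonneg_right (edge_amgm t ht _ _) (int_mul_nonneg n)
  rcases le_or_gt 2 n with h2 | h2
  · have hn2 : (2:ℝ) ≤ (n:ℝ) := by exact_mod_cast h2
    have hd : (0:ℝ) < 2*(n:ℝ)-1 := by linarith
    have hn0 : (0:ℝ) < (n:ℝ) := by linarith
    have ht : (0:ℝ) < (2*(n:ℝ))/(2*(n:ℝ)-1) := by positivity
    have heq : AA n * ‖u n‖^2 + BB n * ‖u (n-1)‖^2
        = ((1-(2*(n:ℝ))/(2*(n:ℝ)-1))*‖u n‖^2 + (1-1/((2*(n:ℝ))/(2*(n:ℝ)-1)))*‖u (n-1)‖^2)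
            * ((n:ℝ)*((n:ℝ)-1)) := by
      rw [AA, BB, if_pos h2, if_pos h2]
      have : (n:ℝ)*2-1 ≠ 0 := by linarith
      field_simp
      ring
    rw [heq]
    exact master _ ht
  · rcases lt_trichotomy n 0 with h3 | h3 | h3
    · -- n ≤ -1
      have hn1 : n ≤ -1 := by omega
      have hnr : (n:ℝ) ≤ -1 := by exact_mod_cast hn1
      have hd1 : (0:ℝ) < 1-2*(n:ℝ) := by linarith
      have hd2 : (0:ℝ) < 2-2*(n:ℝ) := by linarith
      have ht : (0:ℝ) < (1-2*(n:ℝ))/(2-2*(n:ℝ)) := by positivity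
      have hA : AA n = (n:ℝ)*((n:ℝ)-1)/(2-2*(n:ℝ)) := by
        rw [AA, if_neg (by omega), if_neg (by omega)]
      have hB : BB n = (n:ℝ)*((n:ℝ)-1)/(2*(n:ℝ)-1) := by
        rw [BB, if_neg (by omega), if_neg (by omega)]
      have hne1 : 2*(n:ℝ)-1 ≠ 0 := by linarith
      have hne2 : 2-2*(n:ℝ) ≠ 0 := by linarith
      have hne3 : 1-2*(n:ℝ) ≠ 0 := by linarith
      have g1 : 1-(1-2*(n:ℝ))/(2-2*(n:ℝ)) = 1/(2-2*(n:ℝ)) := by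
        have : 1-(n:ℝ) ≠ 0 := by linarith
        field_simp
        ring
      have g2 : 1-1/((1-2*(n:ℝ))/(2-2*(n:ℝ))) = -(1/(1-2*(n:ℝ))) := by
        rw [one_div_div]
        field_simp
        ring
      have hmaster := master ((1-2*(n:ℝ))/(2-2*(n:ℝ))) ht
      rw [g1, g2] at hmaster
      have heq : AA n * ‖u n‖^2 + BB n * ‖u (n-1)‖^2
          = (1/(2-2*(n:ℝ))*‖u n‖^2 + (-(1/(1-2*(n:ℝ))))*‖u (n-1)‖^2) * ((n:ℝ)*((n:ℝ)-1)) := by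
        rw [hA, hB]
        have : 1-(n:ℝ) ≠ 0 := by linarith
        have : (n:ℝ)*2-1 ≠ 0 := by linarith
        have : 1-(n:ℝ)*2 ≠ 0 := by linarith
        field_simp
        ring
      rw [heq]
      exact hmaster
    · -- n = 0
      subst h3
      have hA : AA 0 = 0 := by rw [AA]; norm_num
      have hB : BB 0 = 0 := by rw [BB]; norm_num
      rw [hA, hB]
      norm_num
    · -- n = 1
      have h4 : n = 1 := by omega
      subst h4
      have hA : AA 1 = 0 := by rw [AA]; norm_num
      have hB : BB 1 = 0 := by rw [BB]; norm_num
      rw [hA, hB]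
      norm_num

private lemma coeff_bound (n : ℤ) (hn : n ≠ 0) : 1/4 ≤ AA n + BB (n+1) := by
  rcases le_or_gt 2 n with h2 | h2
  · have hn2 : (2:ℝ) ≤ (n:ℝ) := by exact_mod_cast h2
    have hd : (0:ℝ) < 2*(n:ℝ)-1 := by linarith
    have hA : AA n = -((n:ℝ)*((n:ℝ)-1))/(2*(n:ℝ)-1) := by rw [AA, if_pos h2]
    have hB : BB (n+1) = (n:ℝ)/2 := by
      rw [BB, if_pos (by omega)]
      push_cast
      ring
    have key : AA n + BB (n+1) - 1/4 = 1/(4*(2*(n:ℝ)-1)) := by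
      rw [hA, hB]
      have : (n:ℝ)*2-1 ≠ 0 := by linarith
      field_simp
      ring
    have hpos : (0:ℝ) < 1/(4*(2*(n:ℝ)-1)) := by positivity
    linarith
  · rcases lt_trichotomy n 0 with h3 | h3 | h3
    · rcases eq_or_lt_of_le (by omega : n ≤ -1) with h4 | h4
      · -- n = -1
        subst h4
        have hA : AA (-1) = 1/2 := by rw [AA]; norm_num
        have hB : BB ((-1)+1) = 0 := by norm_num; rw [BB]; norm_num
        rw [hA, hB]; norm_num
      · -- n ≤ -2
        have hn2 : n ≤ -2 := by omega
        have hnr : (n:ℝ) ≤ -2 := by exact_mod_cast hn2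
        have hA : AA n = (n:ℝ)*((n:ℝ)-1)/(2-2*(n:ℝ)) := by
          rw [AA, if_neg (by omega), if_neg (by omega)]
        have hB : BB (n+1) = ((n:ℝ)+1)*(n:ℝ)/(2*(n:ℝ)+1) := by
          rw [BB, if_neg (by omega), if_neg (by omega)]
          push_cast
          ring_nf
        have hd1 : 2*(n:ℝ)+1 < 0 := by linarith
        have hd2 : (0:ℝ) < 2-2*(n:ℝ) := by linarith
        have hne1 : 2*(n:ℝ)+1 ≠ 0 := by linarith
        have hne2 : 2-2*(n:ℝ) ≠ 0 := by linarith
        have key : (AA n + BB (n+1) - 1/4) * ((2-2*(n:ℝ))*(2*(n:ℝ)+1)) = ((n:ℝ)-1)/2 := by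
          rw [hA, hB]
          have : 1-(n:ℝ) ≠ 0 := by linarith
          have : (n:ℝ)*2+1 ≠ 0 := by linarith
          field_simp
          ring
        have hDneg : (2-2*(n:ℝ))*(2*(n:ℝ)+1) < 0 := mul_neg_of_pos_of_neg hd2 hd1
        nlinarith [key, hDneg]
    · exact absurd h3 hn
    · have h4 : n = 1 := by omega
      subst h4
      have hA : AA 1 = 0 := by rw [AA]; norm_num
      have hB : BB (1+1) = 1/2 := by norm_num; rw [BB]; norm_num
      rw [hA, hB]; norm_num

private lemma hardy_base (u : ℤ → ℂ) (hu : (Function.support u).Finite) (h0 : u 0 = 0) :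
    1/4 * ∑' n : ℤ, ‖u n‖^2 ≤ ∑' n : ℤ, ‖u n - u (n-1)‖^2 * ((n:ℝ)*((n:ℝ)-1)) := by
  have Sq : Summable (fun n : ℤ => 1/4 * ‖u n‖^2) :=
    summable_help u hu _ (fun n h1 _ => by simp [h1])
  have S1 : Summable (fun n : ℤ => ‖u n - u (n-1)‖^2*((n:ℝ)*((n:ℝ)-1))) :=
    summable_help u hu _ (fun n h1 h2 => by simp [h1, h2])
  have SA : Summable (fun n : ℤ => AA n * ‖u n‖^2) :=
    summable_help u hu _ (fun n h1 _ => by simp [h1])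
  have SB : Summable (fun n : ℤ => BB n * ‖u (n-1)‖^2) :=
    summable_help u hu _ (fun n _ h2 => by simp [h2])
  have SB' : Summable (fun n : ℤ => BB (n+1) * ‖u n‖^2) :=
    summable_help u hu _ (fun n h1 _ => by simp [h1])
  calc 1/4 * ∑' n : ℤ, ‖u n‖^2 = ∑' n : ℤ, 1/4 * ‖u n‖^2 := tsum_mul_left.symm
    _ ≤ ∑' n : ℤ, (AA n + BB (n+1)) * ‖u n‖^2 := by
        apply Summable.tsum_le_tsum _ Sq (by simpa [add_mul] using SA.add SB')
        intro n
        by_cases hn : n = 0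
        · subst hn; rw [h0]; simp
        · exact mul_le_mul_of_nonneg_right (coeff_bound n hn) (sq_nonneg _)
    _ = ∑' n : ℤ, AA n * ‖u n‖^2 + ∑' n : ℤ, BB (n+1) * ‖u n‖^2 := by
        rw [← Summable.tsum_add SA SB']
        exact tsum_congr (fun n => by ring)
    _ = ∑' n : ℤ, AA n * ‖u n‖^2 + ∑' n : ℤ, BB n * ‖u (n-1)‖^2 := by
        congr 1
        have h := (Equiv.addRight (1:ℤ)).tsum_eq (fun n => BB n * ‖u (n-1)‖^2)
        simpa using h
    _ = ∑' n : ℤ, (AA n * ‖u n‖^2 + BB n * ‖u (n-1)‖^2) := (Summable.tsum_add SA SB).symm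
    _ ≤ ∑' n : ℤ, ‖u n - u (n-1)‖^2*((n:ℝ)*((n:ℝ)-1)) :=
        Summable.tsum_le_tsum (edge_bound u) (SA.add SB) S1

private lemma hardy_aux (k : ℕ) (hk : 1 ≤ k) (u : ℤ → ℂ)
    (hu : (Function.support u).Finite) (h0 : u 0 = 0) :
    ((2*(k:ℝ)-1)^2/4) * ∑' n : ℤ, ‖u n‖^2 * (n:ℝ)^(2*k-2)
      ≤ ∑' n : ℤ, ‖u n - u (n-1)‖^2 * ((n:ℝ)*((n:ℝ)-1)*((n:ℝ)-1/2)^(2*k-2)) := by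
  induction k, hk using Nat.le_induction generalizing u with
  | base =>
      have h := hardy_base u hu h0
      have e1 : (2*((1:ℕ):ℝ)-1)^2/4 = 1/4 := by norm_num
      have e2 : 2*1-2 = 0 := by norm_num
      rw [e1, e2]
      simpa using h
  | succ k hk1 IH =>
      set v : ℤ → ℂ := fun n => (n:ℂ) * u n with hv
      have hv0 : v 0 = 0 := by simp [hv]
      have hvs : (Function.support v).Finite := by
        apply hu.subset
        intro n hn
        simp only [Function.mem_support, hv] at hn ⊢
        exact fun h => hn (by rw [h, mul_zero])
      have hnv : ∀ n : ℤ, ‖v n‖^2 = (n:ℝ)^2 * ‖u n‖^2 := by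
        intro n
        simp only [hv, norm_mul, mul_pow]
        congr 1
        rw [show ((n:ℤ):ℂ) = (((n:ℝ)):ℂ) by push_cast; rfl, Complex.norm_real,
          Real.norm_eq_abs, sq_abs]
      -- exponent bookkeeping
      have h22 : 2*k-2+2 = 2*k := by omega
      have h21 : 2*k-2+1 = 2*k-1 := by omega
      have ekk : 2*(k+1)-2 = 2*k := by omega
      have hevenk : Even (2*k-2) := ⟨k-1, by omega⟩
      -- pointwise key inequality
      have key1 : ∀ n : ℤ,
          ‖v n - v (n-1)‖^2 * ((n:ℝ)*((n:ℝ)-1)*((n:ℝ)-1/2)^(2*k-2))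
            - ((n:ℝ)-1/2)^(2*k-1)*(‖v n‖^2 - ‖v (n-1)‖^2)
            + ((n:ℝ)-1/2)^(2*k-2)*‖v n‖^2/2 + ((n:ℝ)-1/2)^(2*k-2)*‖v (n-1)‖^2/2
          ≤ ‖u n - u (n-1)‖^2 * ((n:ℝ)*((n:ℝ)-1)*((n:ℝ)-1/2)^(2*k)) := by
        intro n
        set c : ℝ := (n:ℝ)-1/2 with hcdef
        have hcpow : (0:ℝ) ≤ c^(2*k-2) := hevenk.pow_nonneg c
        have e5 : c^(2*k) = c^(2*k-2)*c^2 := by rw [← pow_add, h22]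
        have e6 : c^(2*k-1) = c^(2*k-2)*c := by rw [← pow_succ, h21]
        have hnn : (n:ℝ)*((n:ℝ)-1) = c^2 - 1/4 := by rw [hcdef]; ring
        have hid2 : (c:ℂ)*(v n - v (n-1)) - (v n + v (n-1))/2
            = (((n:ℝ)*((n:ℝ)-1) : ℝ):ℂ) * (u n - u (n-1)) := by
          simp only [hv, hcdef]
          push_cast
          ring
        have hkey := key_identity c (v n) (v (n-1))
        rw [hid2] at hkey
        have hnorm : ‖(((n:ℝ)*((n:ℝ)-1) : ℝ):ℂ) * (u n - u (n-1))‖^2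
            = ((n:ℝ)*((n:ℝ)-1))^2 * ‖u n - u (n-1)‖^2 := by
          rw [norm_mul, mul_pow, Complex.norm_real, Real.norm_eq_abs, sq_abs]
        rw [hnorm] at hkey
        have hpar := parallelogram (v n) (v (n-1))
        have expand : ‖v n - v (n-1)‖^2 * ((n:ℝ)*((n:ℝ)-1)*c^(2*k-2))
              - c^(2*k-1)*(‖v n‖^2 - ‖v (n-1)‖^2)
              + c^(2*k-2)*‖v n‖^2/2 + c^(2*k-2)*‖v (n-1)‖^2/2
            = c^(2*k-2) * (c^2*‖v n - v (n-1)‖^2 - c*(‖v n‖^2 - ‖v (n-1)‖^2)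
                + ‖v n + v (n-1)‖^2/4) := by
          rw [hpar, hnn, e6]
          ring
        rw [expand, ← hkey]
        have hnn0 : (0:ℝ) ≤ (n:ℝ)*((n:ℝ)-1) := int_mul_nonneg n
        have hle : (n:ℝ)*((n:ℝ)-1) ≤ c^2 := by rw [hnn]; linarith [sq_nonneg c]
        calc c^(2*k-2) * (((n:ℝ)*((n:ℝ)-1))^2 * ‖u n - u (n-1)‖^2)
            = (c^(2*k-2) * ((n:ℝ)*((n:ℝ)-1)) * ‖u n - u (n-1)‖^2) * ((n:ℝ)*((n:ℝ)-1)) := by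
              ring
          _ ≤ (c^(2*k-2) * ((n:ℝ)*((n:ℝ)-1)) * ‖u n - u (n-1)‖^2) * c^2 := by
              apply mul_le_mul_of_nonneg_left hle
              exact mul_nonneg (mul_nonneg hcpow hnn0) (sq_nonneg _)
          _ = ‖u n - u (n-1)‖^2 * ((n:ℝ)*((n:ℝ)-1)*c^(2*k)) := by
              rw [e5]; ring
      -- summability
      have SF1 : Summable (fun n : ℤ =>
          ‖u n - u (n-1)‖^2 * ((n:ℝ)*((n:ℝ)-1)*((n:ℝ)-1/2)^(2*k))) :=
        summable_help u hu _ (fun n h1 h2 => by simp [h1, h2])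
      have SF3 : Summable (fun n : ℤ =>
          ‖v n - v (n-1)‖^2 * ((n:ℝ)*((n:ℝ)-1)*((n:ℝ)-1/2)^(2*k-2))) :=
        summable_help u hu _ (fun n h1 h2 => by simp [hv, h1, h2])
      have SF4 : Summable (fun n : ℤ => ((n:ℝ)-1/2)^(2*k-1) * ‖v n‖^2) :=
        summable_help u hu _ (fun n h1 _ => by simp [hv, h1])
      have SF5 : Summable (fun n : ℤ => ((n:ℝ)-1/2)^(2*k-1) * ‖v (n-1)‖^2) :=
        summable_help u hu _ (fun n _ h2 => by simp [hv, h2])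
      have SF5' : Summable (fun n : ℤ => (((n:ℝ)+1)-1/2)^(2*k-1) * ‖v n‖^2) :=
        summable_help u hu _ (fun n h1 _ => by simp [hv, h1])
      have SF7 : Summable (fun n : ℤ => ((n:ℝ)-1/2)^(2*k-2) * ‖v n‖^2/2) :=
        summable_help u hu _ (fun n h1 _ => by simp [hv, h1])
      have SF8 : Summable (fun n : ℤ => ((n:ℝ)-1/2)^(2*k-2) * ‖v (n-1)‖^2/2) :=
        summable_help u hu _ (fun n _ h2 => by simp [hv, h2])
      have SF8' : Summable (fun n : ℤ => (((n:ℝ)+1)-1/2)^(2*k-2) * ‖v n‖^2/2) :=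
        summable_help u hu _ (fun n h1 _ => by simp [hv, h1])
      have SG1 : Summable (fun n : ℤ =>
          ‖v n‖^2 * (((n:ℝ)+1/2)^(2*k-1) - ((n:ℝ)-1/2)^(2*k-1))) :=
        summable_help u hu _ (fun n h1 _ => by simp [hv, h1])
      have SG2 : Summable (fun n : ℤ =>
          ‖v n‖^2 * ((((n:ℝ)-1/2)^(2*k-2) + ((n:ℝ)+1/2)^(2*k-2))/2)) :=
        summable_help u hu _ (fun n h1 _ => by simp [hv, h1])
      have Sq9 : Summable (fun n : ℤ => ‖v n‖^2 * (n:ℝ)^(2*k-2)) :=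
        summable_help u hu _ (fun n h1 _ => by simp [hv, h1])
      -- shifts
      have hshift5 : ∑' n : ℤ, (((n:ℝ)+1)-1/2)^(2*k-1) * ‖v n‖^2
          = ∑' n : ℤ, ((n:ℝ)-1/2)^(2*k-1) * ‖v (n-1)‖^2 := by
        have h := (Equiv.addRight (1:ℤ)).tsum_eq
          (fun n : ℤ => ((n:ℝ)-1/2)^(2*k-1) * ‖v (n-1)‖^2)
        simpa using h
      have hshift8 : ∑' n : ℤ, (((n:ℝ)+1)-1/2)^(2*k-2) * ‖v n‖^2/2
          = ∑' n : ℤ, ((n:ℝ)-1/2)^(2*k-2) * ‖v (n-1)‖^2/2 := by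
        have h := (Equiv.addRight (1:ℤ)).tsum_eq
          (fun n : ℤ => ((n:ℝ)-1/2)^(2*k-2) * ‖v (n-1)‖^2/2)
        simpa using h
      -- midpoint bound
      have hcast : ((k-1:ℕ):ℝ) = (k:ℝ)-1 := by
        rw [Nat.cast_sub hk1, Nat.cast_one]
      have hc2 : 2*(k-1) = 2*k-2 := by omega
      have hc3 : 2*(k-1)+1 = 2*k-1 := by omega
      have hmid : ∑' n : ℤ, (2*(k:ℝ)-1) * (‖v n‖^2 * (n:ℝ)^(2*k-2))
          ≤ ∑' n : ℤ, ‖v n‖^2 * (((n:ℝ)+1/2)^(2*k-1) - ((n:ℝ)-1/2)^(2*k-1)) := by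
        apply Summable.tsum_le_tsum _ (Sq9.mul_left _) SG1
        intro n
        have hK := midpoint_pow (k-1) (n:ℝ)
        rw [hc3, hc2, hcast] at hK
        have hco : 2*((k:ℝ)-1)+1 = 2*(k:ℝ)-1 := by ring
        rw [hco] at hK
        calc (2*(k:ℝ)-1) * (‖v n‖^2 * (n:ℝ)^(2*k-2))
            = ‖v n‖^2 * ((2*(k:ℝ)-1) * (n:ℝ)^(2*k-2)) := by ring
          _ ≤ _ := mul_le_mul_of_nonneg_left hK (sq_nonneg _)
      -- average bound
      have havg : ∑' n : ℤ, ‖v n‖^2 * (n:ℝ)^(2*k-2)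
          ≤ ∑' n : ℤ, ‖v n‖^2 * ((((n:ℝ)-1/2)^(2*k-2) + ((n:ℝ)+1/2)^(2*k-2))/2) := by
        apply Summable.tsum_le_tsum _ Sq9 SG2
        intro n
        have hL := avg_pow (k-1) (n:ℝ)
        rw [hc2] at hL
        exact mul_le_mul_of_nonneg_left hL (sq_nonneg _)
      -- IH applied to v
      have hIH := IH v hvs hv0
      -- transfer
      have htrans : ∑' n : ℤ, ‖u n‖^2 * (n:ℝ)^(2*k)
          = ∑' n : ℤ, ‖v n‖^2 * (n:ℝ)^(2*k-2) := by
        apply tsum_congr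
        intro n
        rw [hnv n]
        have : (n:ℝ)^(2*k) = (n:ℝ)^2 * (n:ℝ)^(2*k-2) := by
          rw [← pow_add]
          congr 1
          omega
        rw [this]
        ring
      have hconst : (2*((k+1:ℕ):ℝ)-1)^2/4 = (2*(k:ℝ)-1)^2/4 + (2*(k:ℝ)-1) + 1 := by
        push_cast
        ring
      -- combine sums
      have hg1 : ∑' n : ℤ, ‖v n‖^2 * (((n:ℝ)+1/2)^(2*k-1) - ((n:ℝ)-1/2)^(2*k-1))
          = ∑' n : ℤ, ((n:ℝ)-1/2)^(2*k-1) * ‖v (n-1)‖^2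
            - ∑' n : ℤ, ((n:ℝ)-1/2)^(2*k-1) * ‖v n‖^2 := by
        rw [← hshift5, ← Summable.tsum_sub SF5' SF4]
        exact tsum_congr (fun n => by ring)
      have hg2 : ∑' n : ℤ, ‖v n‖^2 * ((((n:ℝ)-1/2)^(2*k-2) + ((n:ℝ)+1/2)^(2*k-2))/2)
          = ∑' n : ℤ, ((n:ℝ)-1/2)^(2*k-2) * ‖v n‖^2/2
            + ∑' n : ℤ, ((n:ℝ)-1/2)^(2*k-2) * ‖v (n-1)‖^2/2 := by
        rw [← hshift8, ← Summable.tsum_add SF7 SF8']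
        exact tsum_congr (fun n => by ring)
      have hbig : ∑' n : ℤ, (‖v n - v (n-1)‖^2 * ((n:ℝ)*((n:ℝ)-1)*((n:ℝ)-1/2)^(2*k-2))
            - ((n:ℝ)-1/2)^(2*k-1)*(‖v n‖^2 - ‖v (n-1)‖^2)
            + ((n:ℝ)-1/2)^(2*k-2)*‖v n‖^2/2 + ((n:ℝ)-1/2)^(2*k-2)*‖v (n-1)‖^2/2)
          = ∑' n : ℤ, ‖v n - v (n-1)‖^2 * ((n:ℝ)*((n:ℝ)-1)*((n:ℝ)-1/2)^(2*k-2))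
            + ∑' n : ℤ, ‖v n‖^2 * (((n:ℝ)+1/2)^(2*k-1) - ((n:ℝ)-1/2)^(2*k-1))
            + ∑' n : ℤ, ‖v n‖^2 * ((((n:ℝ)-1/2)^(2*k-2) + ((n:ℝ)+1/2)^(2*k-2))/2) := by
        rw [hg1, hg2]
        have e : ∀ n : ℤ, (‖v n - v (n-1)‖^2 * ((n:ℝ)*((n:ℝ)-1)*((n:ℝ)-1/2)^(2*k-2))
              - ((n:ℝ)-1/2)^(2*k-1)*(‖v n‖^2 - ‖v (n-1)‖^2)
              + ((n:ℝ)-1/2)^(2*k-2)*‖v n‖^2/2 + ((n:ℝ)-1/2)^(2*k-2)*‖v (n-1)‖^2/2)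
            = ‖v n - v (n-1)‖^2 * ((n:ℝ)*((n:ℝ)-1)*((n:ℝ)-1/2)^(2*k-2))
              - ((n:ℝ)-1/2)^(2*k-1) * ‖v n‖^2
              + ((n:ℝ)-1/2)^(2*k-1) * ‖v (n-1)‖^2
              + (((n:ℝ)-1/2)^(2*k-2)*‖v n‖^2/2 + ((n:ℝ)-1/2)^(2*k-2)*‖v (n-1)‖^2/2) := by
          intro n; ring
        rw [tsum_congr e, Summable.tsum_add (((SF3.sub SF4).add SF5)) (SF7.add SF8),
          Summable.tsum_add ((SF3.sub SF4)) SF5, Summable.tsum_sub SF3 SF4, Summable.tsum_add SF7 SF8]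
        ring
      -- final assembly
      rw [ekk, htrans, hconst, add_mul, add_mul, one_mul]
      calc (2*(k:ℝ)-1)^2/4 * ∑' n : ℤ, ‖v n‖^2 * (n:ℝ)^(2*k-2)
            + (2*(k:ℝ)-1) * ∑' n : ℤ, ‖v n‖^2 * (n:ℝ)^(2*k-2)
            + ∑' n : ℤ, ‖v n‖^2 * (n:ℝ)^(2*k-2)
          ≤ ∑' n : ℤ, ‖v n - v (n-1)‖^2 * ((n:ℝ)*((n:ℝ)-1)*((n:ℝ)-1/2)^(2*k-2))
            + ∑' n : ℤ, ‖v n‖^2 * (((n:ℝ)+1/2)^(2*k-1) - ((n:ℝ)-1/2)^(2*k-1))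
            + ∑' n : ℤ, ‖v n‖^2 * ((((n:ℝ)-1/2)^(2*k-2) + ((n:ℝ)+1/2)^(2*k-2))/2) := by
            apply add_le_add (add_le_add hIH _) havg
            calc (2*(k:ℝ)-1) * ∑' n : ℤ, ‖v n‖^2 * (n:ℝ)^(2*k-2)
                = ∑' n : ℤ, (2*(k:ℝ)-1) * (‖v n‖^2 * (n:ℝ)^(2*k-2)) := tsum_mul_left.symm
              _ ≤ _ := hmid
        _ = ∑' n : ℤ, (‖v n - v (n-1)‖^2 * ((n:ℝ)*((n:ℝ)-1)*((n:ℝ)-1/2)^(2*k-2))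
              - ((n:ℝ)-1/2)^(2*k-1)*(‖v n‖^2 - ‖v (n-1)‖^2)
              + ((n:ℝ)-1/2)^(2*k-2)*‖v n‖^2/2 + ((n:ℝ)-1/2)^(2*k-2)*‖v (n-1)‖^2/2) :=
            hbig.symm
        _ ≤ ∑' n : ℤ, ‖u n - u (n-1)‖^2 * ((n:ℝ)*((n:ℝ)-1)*((n:ℝ)-1/2)^(2*k)) := by
            apply Summable.tsum_le_tsum key1 _ SF1
            exact (((SF3.sub SF4).add SF5).add (SF7.add SF8)).congr (fun n => by ring)

theorem weighted_hardy
    (k : ℕ) (hk : 1 ≤ k) (u : ℤ → ℂ)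
    (hu : (Function.support u).Finite) (h0 : u 0 = 0) :
    ∑' n : ℤ, ‖u n - u (n - 1)‖ ^ 2 * ((n : ℝ) - 1 / 2) ^ (2 * k) ≥
      ((2 * (k : ℝ) - 1) ^ 2 / 4) * ∑' n : ℤ, ‖u n‖ ^ 2 * (n : ℝ) ^ (2 * k - 2) := by
  have h1 := hardy_aux k hk u hu h0
  have h2 : ∑' n : ℤ, ‖u n - u (n-1)‖^2 * ((n:ℝ)*((n:ℝ)-1)*((n:ℝ)-1/2)^(2*k-2))
      ≤ ∑' n : ℤ, ‖u n - u (n - 1)‖ ^ 2 * ((n : ℝ) - 1 / 2) ^ (2 * k) := by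
    apply Summable.tsum_le_tsum _
      (summable_help u hu _ (fun n h1 h2 => by simp [h1, h2]))
      (summable_help u hu _ (fun n h1 h2 => by simp [h1, h2]))
    intro n
    have hev : Even (2*k-2) := ⟨k-1, by omega⟩
    have hcpow : (0:ℝ) ≤ ((n:ℝ)-1/2)^(2*k-2) := hev.pow_nonneg _
    have hnn : (n:ℝ)*((n:ℝ)-1) ≤ ((n:ℝ)-1/2)^2 := by nlinarith [int_mul_nonneg n]
    have he : ((n:ℝ)-1/2)^(2*k) = ((n:ℝ)-1/2)^2 * ((n:ℝ)-1/2)^(2*k-2) := by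
      rw [← pow_add]
      congr 1
      omega
    rw [he]
    calc ‖u n - u (n-1)‖^2 * ((n:ℝ)*((n:ℝ)-1)*((n:ℝ)-1/2)^(2*k-2))
        = ((n:ℝ)*((n:ℝ)-1)) * (‖u n - u (n-1)‖^2 * ((n:ℝ)-1/2)^(2*k-2)) := by ring
      _ ≤ ((n:ℝ)-1/2)^2 * (‖u n - u (n-1)‖^2 * ((n:ℝ)-1/2)^(2*k-2)) := by
          apply mul_le_mul_of_nonneg_right hnn
          exact mul_nonneg (sq_nonneg _) hcpow
      _ = ‖u n - u (n - 1)‖ ^ 2 * (((n:ℝ)-1/2)^2 * ((n:ℝ)-1/2)^(2*k-2)) := by ring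
  exact le_trans h1 h2
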